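/- arXiv:2106.01432 — 3 statements merged into one kernel-verified Lean document; each statement's English description precedes it below -/
import Mathlib

section
/- Let t > 0 and let m̂: ℝ^d → [0,1] be measurable with plug-in classifier Ĉ(x) = 1{m̂(x) ≥ 1/2}. Suppose the margin condition P(|m(X) − 1/2| ≤ t) ≤ c6 t^α holds for constants c6 > 0 and α > 0. Then: (i) 2·E[ |m(X) − 1/2| · 1{|m(X) − 1/2| ≤ t, Ĉ(X) ≠ C(X)} ] ≤ 2 c6 t^{1+α}; and (ii) 2·E[ |m(X) − 1/2| · 1{|m(X) − 1/2| > t, Ĉ(X) ≠ C(X)} ] ≤ P(|m(X) − m̂(X)| > t). -/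
open MeasureTheory

/-- **Margin decomposition bounds for plug-in classifiers.**
Let `P` be a probability measure on `ℝ^d`, `m : ℝ^d → [0,1]` measurable with Bayes
classifier `C(x) = 1{m(x) ≥ 1/2}`, and let `m̂ : ℝ^d → [0,1]` be measurable with plug-in
classifier `Ĉ(x) = 1{m̂(x) ≥ 1/2}`.  Fix `t > 0` and assume the margin condition
`P(|m(X) − 1/2| ≤ t) ≤ c₆ t^α` with `c₆ > 0`, `α > 0`. Then
(i)  `2 E[|m(X) − 1/2| · 1{|m(X) − 1/2| ≤ t, Ĉ(X) ≠ C(X)}] ≤ 2 c₆ t^{1+α}`, and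
(ii) `2 E[|m(X) − 1/2| · 1{|m(X) − 1/2| > t, Ĉ(X) ≠ C(X)}] ≤ P(|m(X) − m̂(X)| > t)`. -/
theorem margin_decomposition_bounds
    {d : ℕ} (Pd : Measure (EuclideanSpace ℝ (Fin d))) [IsProbabilityMeasure Pd]
    (m mhat : EuclideanSpace ℝ (Fin d) → ℝ)
    (hm_meas : Measurable m) (hmhat_meas : Measurable mhat)
    (hm01 : ∀ x, m x ∈ Set.Icc (0 : ℝ) 1) (hmhat01 : ∀ x, mhat x ∈ Set.Icc (0 : ℝ) 1)
    (t c6 α : ℝ) (ht : 0 < t) (hc6 : 0 < c6) (hα : 0 < α)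
    (hmargin : (Pd {x | |m x - 1 / 2| ≤ t}).toReal ≤ c6 * t ^ α) :
    2 * (∫ x, |m x - 1 / 2| *
          (if |m x - 1 / 2| ≤ t ∧
              decide ((1 : ℝ) / 2 ≤ mhat x) ≠ decide ((1 : ℝ) / 2 ≤ m x)
            then (1 : ℝ) else 0) ∂Pd) ≤ 2 * c6 * t ^ (1 + α) ∧
    2 * (∫ x, |m x - 1 / 2| *
          (if t < |m x - 1 / 2| ∧
              decide ((1 : ℝ) / 2 ≤ mhat x) ≠ decide ((1 : ℝ) / 2 ≤ m x)
            then (1 : ℝ) else 0) ∂Pd) ≤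
      (Pd {x | t < |m x - mhat x|}).toReal := by
  have hS : MeasurableSet {x : EuclideanSpace ℝ (Fin d) | |m x - 1 / 2| ≤ t} :=
    measurableSet_le (hm_meas.sub measurable_const).abs measurable_const
  have hT : MeasurableSet {x : EuclideanSpace ℝ (Fin d) | t < |m x - mhat x|} :=
    measurableSet_lt measurable_const (hm_meas.sub hmhat_meas).abs
  constructor
  · -- part (i)
    have hle : (∫ x, |m x - 1 / 2| *
          (if |m x - 1 / 2| ≤ t ∧
              decide ((1 : ℝ) / 2 ≤ mhat x) ≠ decide ((1 : ℝ) / 2 ≤ m x)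
            then (1 : ℝ) else 0) ∂Pd) ≤
        ∫ x, ({x : EuclideanSpace ℝ (Fin d) | |m x - 1 / 2| ≤ t}.indicator
          (fun _ => t)) x ∂Pd := by
      apply integral_mono_of_nonneg
      · filter_upwards with x
        split_ifs with h
        · simp [abs_nonneg]
        · simp
      · exact (integrable_const t).indicator hS
      · filter_upwards with x
        split_ifs with h
        · rw [mul_one]
          have hx : x ∈ {x : EuclideanSpace ℝ (Fin d) | |m x - 1 / 2| ≤ t} := h.1
          rw [Set.indicator_of_mem hx]
          exact h.1
        · rw [mul_zero]
          exact Set.indicator_nonneg (fun _ _ => ht.le) x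
    have hInd : ∫ x, ({x : EuclideanSpace ℝ (Fin d) | |m x - 1 / 2| ≤ t}.indicator
          (fun _ => t)) x ∂Pd = t * (Pd {x | |m x - 1 / 2| ≤ t}).toReal := by
      rw [integral_indicator_const _ hS, smul_eq_mul, mul_comm]
      rfl
    calc 2 * _ ≤ 2 * (t * (Pd {x | |m x - 1 / 2| ≤ t}).toReal) := by
          rw [← hInd]; linarith
      _ ≤ 2 * (t * (c6 * t ^ α)) := by
          have := mul_le_mul_of_nonneg_left hmargin ht.le
          linarith
      _ = 2 * c6 * t ^ (1 + α) := by
          rw [Real.rpow_add ht, Real.rpow_one]; ring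
  · -- part (ii)
    have h2 : 2 * (∫ x, |m x - 1 / 2| *
          (if t < |m x - 1 / 2| ∧
              decide ((1 : ℝ) / 2 ≤ mhat x) ≠ decide ((1 : ℝ) / 2 ≤ m x)
            then (1 : ℝ) else 0) ∂Pd) =
        ∫ x, 2 * (|m x - 1 / 2| *
          (if t < |m x - 1 / 2| ∧
              decide ((1 : ℝ) / 2 ≤ mhat x) ≠ decide ((1 : ℝ) / 2 ≤ m x)
            then (1 : ℝ) else 0)) ∂Pd := (integral_const_mul 2 _).symm
    rw [h2]
    have hle : (∫ x, 2 * (|m x - 1 / 2| *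
          (if t < |m x - 1 / 2| ∧
              decide ((1 : ℝ) / 2 ≤ mhat x) ≠ decide ((1 : ℝ) / 2 ≤ m x)
            then (1 : ℝ) else 0)) ∂Pd) ≤
        ∫ x, ({x : EuclideanSpace ℝ (Fin d) | t < |m x - mhat x|}.indicator
          (fun _ => (1 : ℝ))) x ∂Pd := by
      apply integral_mono_of_nonneg
      · filter_upwards with x
        split_ifs with h
        · positivity
        · simp
      · exact (integrable_const 1).indicator hT
      · filter_upwards with x
        split_ifs with h
        · obtain ⟨h1, h2⟩ := h
          have hd : ¬(((1 : ℝ) / 2 ≤ mhat x) ↔ ((1 : ℝ) / 2 ≤ m x)) := by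
            intro hiff
            exact h2 (decide_eq_decide.mpr hiff)
          have hmx := hm01 x
          have hmhx := hmhat01 x
          have hb : |m x - 1 / 2| ≤ 1 / 2 := by
            rw [abs_le]; constructor <;> [linarith [hmx.1]; linarith [hmx.2]]
          have hmem : x ∈ {x : EuclideanSpace ℝ (Fin d) | t < |m x - mhat x|} := by
            simp only [Set.mem_setOf_eq]
            rcases le_or_gt (1 / 2 : ℝ) (m x) with hge | hlt
            · have hmh : mhat x < 1 / 2 := by
                by_contra hc
                exact hd ⟨fun _ => hge, fun _ => not_lt.mp hc⟩
              have : |m x - 1 / 2| = m x - 1 / 2 := abs_of_nonneg (by linarith)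
              calc t < m x - 1 / 2 := by rw [← this]; exact h1
                _ ≤ m x - mhat x := by linarith
                _ ≤ |m x - mhat x| := le_abs_self _
            · have hmh : (1 : ℝ) / 2 ≤ mhat x := by
                by_contra hc
                exact hd ⟨fun hh => absurd hh hc, fun hh => absurd hh (not_le.mpr hlt)⟩
              have : |m x - 1 / 2| = 1 / 2 - m x := by
                rw [abs_of_nonpos (by linarith)]; ring
              calc t < 1 / 2 - m x := by rw [← this]; exact h1
                _ ≤ mhat x - m x := by linarith
                _ ≤ |m x - mhat x| := by rw [abs_sub_comm]; exact le_abs_self _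
          rw [Set.indicator_of_mem hmem, mul_one]
          linarith [hb]
        · rw [mul_zero, mul_zero]
          exact Set.indicator_nonneg (fun _ _ => zero_le_one) x
    calc _ ≤ _ := hle
      _ = (Pd {x | t < |m x - mhat x|}).toReal := by
          rw [integral_indicator_const _ hT, smul_eq_mul, mul_one]
          rfl
end

section
/- Let μ be a Borel probability measure on ℝ^d whose support is contained in [0,1]^d, let h > 0, and suppose [0,1]^d ⊆ ∪_{i=1}^{M} B(z_i, h/2) for points z_1,…,z_M ∈ ℝ^d. Then for every ñ > 0, ∫_{[0,1]^d} exp(−ñ · μ(B(x, h))) dμ(x) ≤ M / (e·ñ). -/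
open MeasureTheory Metric

lemma mul_exp_neg_le_inv_exp_one (a : ℝ) (ha : 0 ≤ a) :
    a * Real.exp (-a) ≤ (Real.exp 1)⁻¹ := by
  have h1 : a ≤ Real.exp (a - 1) := by
    have := Real.add_one_le_exp (a - 1); linarith
  have h2 : Real.exp (a - 1) = Real.exp a / Real.exp 1 := by
    rw [Real.exp_sub]
  have h3 : Real.exp (-a) = (Real.exp a)⁻¹ := Real.exp_neg a
  have hea : 0 < Real.exp a := Real.exp_pos a
  have he1 : 0 < Real.exp 1 := Real.exp_pos 1
  have h4 : Real.exp (a - 1) * Real.exp 1 = Real.exp a := by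
    rw [← Real.exp_add]; ring_nf
  have key : a * Real.exp 1 ≤ Real.exp a := by nlinarith
  rw [h3, ← div_eq_mul_inv, div_le_iff₀ hea]
  have hcancel : (Real.exp 1)⁻¹ * Real.exp 1 = 1 := inv_mul_cancel₀ he1.ne'
  nlinarith [mul_le_mul_of_nonneg_left key (le_of_lt (inv_pos.2 he1))]

/-- **Covering lemma for exponential ball-mass integrals.**
Let `μ` be a Borel probability measure on `ℝ^d` supported in `[0,1]^d`, let `h > 0`, and
suppose `[0,1]^d ⊆ ⋃_{i=1}^M B(z_i, h/2)` for points `z₁,…,z_M`.  Then for every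
`ñ > 0`, `∫_{[0,1]^d} exp(−ñ · μ(B(x,h))) dμ(x) ≤ M / (e · ñ)`. -/
theorem covering_exponential_integral_bound
    {d M : ℕ} (μ : Measure (EuclideanSpace ℝ (Fin d))) [IsProbabilityMeasure μ]
    (hsupp : μ {x : EuclideanSpace ℝ (Fin d) | ∀ i, x i ∈ Set.Icc (0 : ℝ) 1}ᶜ = 0)
    (h : ℝ) (hh : 0 < h) (z : Fin M → EuclideanSpace ℝ (Fin d))
    (hcover : {x : EuclideanSpace ℝ (Fin d) | ∀ i, x i ∈ Set.Icc (0 : ℝ) 1} ⊆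
      ⋃ i, closedBall (z i) (h / 2))
    (ntil : ℝ) (hn : 0 < ntil) :
    ∫ x in {x : EuclideanSpace ℝ (Fin d) | ∀ i, x i ∈ Set.Icc (0 : ℝ) 1},
        Real.exp (-ntil * (μ (closedBall x h)).toReal) ∂μ ≤
      M / (Real.exp 1 * ntil) := by
  set Q : Set (EuclideanSpace ℝ (Fin d)) :=
    {x : EuclideanSpace ℝ (Fin d) | ∀ i, x i ∈ Set.Icc (0 : ℝ) 1} with hQ
  set f : EuclideanSpace ℝ (Fin d) → ℝ :=
    fun x => Real.exp (-ntil * (μ (closedBall x h)).toReal) with hf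
  have hQmeas : MeasurableSet Q := by
    have : Q = ⋂ i, (fun x : EuclideanSpace ℝ (Fin d) => x i) ⁻¹' Set.Icc (0 : ℝ) 1 := by
      ext x; simp [hQ]
    rw [this]
    exact MeasurableSet.iInter fun i =>
      (by fun_prop : Measurable fun x : EuclideanSpace ℝ (Fin d) => x i) measurableSet_Icc
  -- measurability of f
  have hmb : Measurable fun x : EuclideanSpace ℝ (Fin d) => μ (closedBall x h) := by
    have : ∀ x : EuclideanSpace ℝ (Fin d), closedBall x h =
        Prod.mk x ⁻¹' {p : EuclideanSpace ℝ (Fin d) × EuclideanSpace ℝ (Fin d) |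
          dist p.2 p.1 ≤ h} := by
      intro x; ext y; simp [mem_closedBall]
    simp_rw [this]
    exact measurable_measure_prodMk_left
      (measurableSet_le (by fun_prop) measurable_const)
  have hfmeas : Measurable f :=
    (Real.measurable_exp.comp ((measurable_const.mul hmb.ennreal_toReal)))
  have hfpos : ∀ x, 0 < f x := fun x => Real.exp_pos _
  have hfle1 : ∀ x, f x ≤ 1 := by
    intro x
    rw [hf]
    simp only [← Real.exp_zero]
    apply Real.exp_le_exp.2
    have : 0 ≤ (μ (closedBall x h)).toReal := ENNReal.toReal_nonneg
    nlinarith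
  have hint : ∀ ν : Measure (EuclideanSpace ℝ (Fin d)), IsFiniteMeasure ν → Integrable f ν := by
    intro ν hν
    refine ⟨hfmeas.aestronglyMeasurable, ?_⟩
    apply HasFiniteIntegral.of_bounded (C := 1)
    filter_upwards with x
    rw [Real.norm_eq_abs, abs_of_pos (hfpos x)]
    exact hfle1 x
  -- the measures
  set ν : Measure (EuclideanSpace ℝ (Fin d)) :=
    ∑ i : Fin M, μ.restrict (Q ∩ closedBall (z i) (h / 2)) with hν
  have hνfin : IsFiniteMeasure ν := by
    rw [hν]; infer_instance
  have hle : μ.restrict Q ≤ ν := by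
    have h1 : μ.restrict Q ≤ μ.restrict (⋃ i, Q ∩ closedBall (z i) (h / 2)) := by
      apply Measure.restrict_mono _ le_rfl
      intro x hx
      obtain ⟨i, hi⟩ := Set.mem_iUnion.1 (hcover hx)
      exact Set.mem_iUnion.2 ⟨i, hx, hi⟩
    refine h1.trans ?_
    refine (Measure.restrict_iUnion_le (s := fun i => Q ∩ closedBall (z i) (h / 2))).trans ?_
    rw [hν, Measure.sum_fintype]
  calc ∫ x in Q, f x ∂μ ≤ ∫ x, f x ∂ν := by
        apply integral_mono_measure hle
        · filter_upwards with x using (hfpos x).le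
        · exact hint ν hνfin
    _ = ∑ i : Fin M, ∫ x in Q ∩ closedBall (z i) (h / 2), f x ∂μ := by
        rw [hν]
        exact integral_finset_sum_measure fun i _ => hint _ inferInstance
    _ ≤ ∑ _i : Fin M, 1 / (Real.exp 1 * ntil) := by
        apply Finset.sum_le_sum
        intro i _
        set c : ℝ := (μ (closedBall (z i) (h / 2))).toReal with hc
        have hcnn : 0 ≤ c := ENNReal.toReal_nonneg
        have hSB : Q ∩ closedBall (z i) (h / 2) ⊆ closedBall (z i) (h / 2) :=
          Set.inter_subset_right
        have hS : MeasurableSet (Q ∩ closedBall (z i) (h / 2)) :=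
          hQmeas.inter measurableSet_closedBall
        have step1 : ∫ x in Q ∩ closedBall (z i) (h / 2), f x ∂μ ≤
            Real.exp (-ntil * c) * (μ (Q ∩ closedBall (z i) (h / 2))).toReal := by
          have hb : ∀ x ∈ Q ∩ closedBall (z i) (h / 2), f x ≤ Real.exp (-ntil * c) := by
            intro x hx
            have hsub : closedBall (z i) (h / 2) ⊆ closedBall x h := by
              intro y hy
              have hd : dist x (z i) ≤ h / 2 := hx.2
              have : dist y x ≤ dist y (z i) + dist (z i) x := dist_triangle _ _ _
              rw [mem_closedBall] at *
              rw [dist_comm] at hd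
              linarith
            have hmono : μ (closedBall (z i) (h / 2)) ≤ μ (closedBall x h) :=
              measure_mono hsub
            have : c ≤ (μ (closedBall x h)).toReal :=
              ENNReal.toReal_mono (measure_ne_top μ _) hmono
            exact Real.exp_le_exp.2 (by nlinarith)
          calc ∫ x in Q ∩ closedBall (z i) (h / 2), f x ∂μ ≤
              ∫ _x in Q ∩ closedBall (z i) (h / 2), Real.exp (-ntil * c) ∂μ := by
                apply setIntegral_mono_on (hint _ inferInstance).integrableOn
                  (integrableOn_const (measure_ne_top _ _)) hS hb
            _ = (μ (Q ∩ closedBall (z i) (h / 2))).toReal * Real.exp (-ntil * c) := by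
                rw [setIntegral_const, smul_eq_mul, measureReal_def]
            _ = _ := by ring
        have step2 : (μ (Q ∩ closedBall (z i) (h / 2))).toReal ≤ c :=
          ENNReal.toReal_mono (measure_ne_top μ _) (measure_mono hSB)
        have step3 : Real.exp (-ntil * c) * c ≤ 1 / (Real.exp 1 * ntil) := by
          have key := mul_exp_neg_le_inv_exp_one (ntil * c) (by positivity)
          have he1 : 0 < Real.exp 1 := Real.exp_pos 1
          have hx : Real.exp (-(ntil * c)) = Real.exp (-ntil * c) := by ring_nf
          rw [hx] at key
          rw [div_eq_mul_inv, one_mul, mul_inv]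
          calc Real.exp (-ntil * c) * c = (ntil * c * Real.exp (-ntil * c)) * ntil⁻¹ := by
                field_simp
            _ ≤ (Real.exp 1)⁻¹ * ntil⁻¹ := by
                apply mul_le_mul_of_nonneg_right key (by positivity)
        calc ∫ x in Q ∩ closedBall (z i) (h / 2), f x ∂μ ≤
            Real.exp (-ntil * c) * (μ (Q ∩ closedBall (z i) (h / 2))).toReal := step1
          _ ≤ Real.exp (-ntil * c) * c := by
              apply mul_le_mul_of_nonneg_left step2 (Real.exp_pos _).le
          _ ≤ 1 / (Real.exp 1 * ntil) := step3
    _ = M / (Real.exp 1 * ntil) := by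
        rw [Finset.sum_const, Finset.card_univ, Fintype.card_fin, nsmul_eq_mul]
        ring
end

section
/- Let δ ∈ (0, 1/4], Δ ≥ δ, and ε ≥ 0. On a probability space carrying random variables X^u (in ℝ^d), X̃ (in ℝ^d) and Ỹ ∈ {0,1}, suppose: (i) P(Ỹ = 1 | X̃, X^u) = m(X^u) almost surely; (ii) almost surely min{1 − m̂(X^u), m̂(X^u)} ≤ δ; (iii) |m̂(x) − m(x)| ≤ ε for every x with min{1 − m̂(x), m̂(x)} ≤ Δ. Define the pseudo-label Ŷ = 1{m̂(X^u) ≥ 1/2}. Then almost surely P(Ŷ = 1, Ỹ = 0 | X̃, X^u) ≤ δ + ε and P(Ŷ = 0, Ỹ = 1 | X̃, X^u) ≤ δ + ε, and consequently E(|Ŷ − Ỹ| | X̃) ≤ 2δ + 2ε almost surely. -/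
open MeasureTheory ProbabilityTheory

/-- **Pseudo-label error bound for high-confidence points.**
Let `δ ∈ (0, 1/4]`, `Δ ≥ δ`, `ε ≥ 0`.  On a probability space carrying random variables
`X^u, X̃` (in `ℝ^d`) and `Ỹ ∈ {0,1}`, suppose (i) `P(Ỹ = 1 ∣ X̃, X^u) = m(X^u)` a.s.,
(ii) a.s. `min{1 − m̂(X^u), m̂(X^u)} ≤ δ`, and (iii) `|m̂(x) − m(x)| ≤ ε` whenever
`min{1 − m̂(x), m̂(x)} ≤ Δ`.  With the pseudo-label `Ŷ = 1{m̂(X^u) ≥ 1/2}`, almost surely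
`P(Ŷ = 1, Ỹ = 0 ∣ X̃, X^u) ≤ δ + ε` and `P(Ŷ = 0, Ỹ = 1 ∣ X̃, X^u) ≤ δ + ε`, and
consequently `E(|Ŷ − Ỹ| ∣ X̃) ≤ 2δ + 2ε` almost surely. -/
theorem pseudo_label_conditional_error_bound
    {d : ℕ} {Ω : Type*} [MeasurableSpace Ω] (μ : Measure Ω) [IsProbabilityMeasure μ]
    (m mhat : EuclideanSpace ℝ (Fin d) → ℝ)
    (hm_meas : Measurable m) (hmhat_meas : Measurable mhat)
    (hm01 : ∀ x, m x ∈ Set.Icc (0 : ℝ) 1) (hmhat01 : ∀ x, mhat x ∈ Set.Icc (0 : ℝ) 1)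
    (δ Δ ε : ℝ) (hδ : δ ∈ Set.Ioc (0 : ℝ) (1 / 4)) (hΔ : δ ≤ Δ) (hε : 0 ≤ ε)
    (Xu Xt : Ω → EuclideanSpace ℝ (Fin d)) (Yt : Ω → Bool)
    (hXu : Measurable Xu) (hXt : Measurable Xt) (hYt : Measurable Yt)
    -- (i)  P(Ỹ = 1 ∣ X̃, X^u) = m(X^u) almost surely
    (hcond : μ[(fun ω => if Yt ω then (1 : ℝ) else 0) |
        MeasurableSpace.comap (fun ω => (Xt ω, Xu ω)) inferInstance]
      =ᵐ[μ] fun ω => m (Xu ω))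
    -- (ii) X^u is a high-confidence point at level δ, almost surely
    (hhigh : ∀ᵐ ω ∂μ, min (1 - mhat (Xu ω)) (mhat (Xu ω)) ≤ δ)
    -- (iii) the initial estimate is ε-accurate on the Δ-high-confidence region
    (hacc : ∀ x, min (1 - mhat x) (mhat x) ≤ Δ → |mhat x - m x| ≤ ε) :
    (∀ᵐ ω ∂μ,
      (μ[(fun ω' => if (1 : ℝ) / 2 ≤ mhat (Xu ω') ∧ Yt ω' = false then (1 : ℝ) else 0) |
          MeasurableSpace.comap (fun ω' => (Xt ω', Xu ω')) inferInstance]) ω ≤ δ + ε) ∧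
    (∀ᵐ ω ∂μ,
      (μ[(fun ω' => if ¬ (1 : ℝ) / 2 ≤ mhat (Xu ω') ∧ Yt ω' = true then (1 : ℝ) else 0) |
          MeasurableSpace.comap (fun ω' => (Xt ω', Xu ω')) inferInstance]) ω ≤ δ + ε) ∧
    (∀ᵐ ω ∂μ,
      (μ[(fun ω' => |(if (1 : ℝ) / 2 ≤ mhat (Xu ω') then (1 : ℝ) else 0) -
            (if Yt ω' then (1 : ℝ) else 0)|) |
          MeasurableSpace.comap Xt inferInstance]) ω ≤ 2 * δ + 2 * ε) := by
  have hGle : MeasurableSpace.comap (fun ω => (Xt ω, Xu ω)) inferInstance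
      ≤ ‹MeasurableSpace Ω› := (hXt.prodMk hXu).comap_le
  set a : Ω → ℝ := fun ω => if (1 : ℝ) / 2 ≤ mhat (Xu ω) then 1 else 0 with hadef
  set y : Ω → ℝ := fun ω => if Yt ω then (1 : ℝ) else 0 with hydef
  -- measurability
  have ha_measG : Measurable[MeasurableSpace.comap (fun ω => (Xt ω, Xu ω)) inferInstance] a := by
    have h2 : Measurable
        (fun p : (EuclideanSpace ℝ (Fin d)) × (EuclideanSpace ℝ (Fin d)) =>
          if (1 : ℝ) / 2 ≤ mhat p.2 then (1 : ℝ) else 0) :=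
      Measurable.ite (measurableSet_le measurable_const (hmhat_meas.comp measurable_snd))
        measurable_const measurable_const
    exact h2.comp (comap_measurable _)
  have ha_meas : Measurable a := ha_measG.mono hGle le_rfl
  have hy_meas : Measurable y :=
    Measurable.ite (hYt (measurableSet_singleton true)) measurable_const measurable_const
  have hbint : ∀ (f : Ω → ℝ), Measurable f → (∀ ω, |f ω| ≤ 1) → Integrable f μ := fun f hf hb =>
    ⟨hf.aestronglyMeasurable, HasFiniteIntegral.of_bounded (C := 1) (ae_of_all μ hb)⟩
  have haval : ∀ ω, ((1 : ℝ) / 2 ≤ mhat (Xu ω) → a ω = 1) ∧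
      (¬ (1 : ℝ) / 2 ≤ mhat (Xu ω) → a ω = 0) :=
    fun ω => ⟨fun h => if_pos h, fun h => if_neg h⟩
  have hyval : ∀ ω, (Yt ω = true → y ω = 1) ∧ (Yt ω = false → y ω = 0) :=
    fun ω => ⟨fun h => if_pos h, fun h => if_neg (by simp [h])⟩
  have ha01 : ∀ ω, a ω = 0 ∨ a ω = 1 := by
    intro ω
    by_cases h : (1 : ℝ) / 2 ≤ mhat (Xu ω)
    · exact Or.inr ((haval ω).1 h)
    · exact Or.inl ((haval ω).2 h)
  have hy01 : ∀ ω, y ω = 0 ∨ y ω = 1 := by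
    intro ω
    cases h : Yt ω
    · exact Or.inl ((hyval ω).2 h)
    · exact Or.inr ((hyval ω).1 h)
  have habs : ∀ (f : Ω → ℝ), (∀ ω, f ω = 0 ∨ f ω = 1) → ∀ ω, |f ω| ≤ 1 := by
    intro f h ω; rcases h ω with h' | h' <;> rw [h'] <;> norm_num
  have hy_int : Integrable y μ := hbint y hy_meas (habs y hy01)
  have h1y_int : Integrable (fun ω => 1 - y ω) μ := (integrable_const 1).sub hy_int
  -- conditional expectation of 1 - y
  have hsub : μ[(fun ω => 1 - y ω)|MeasurableSpace.comap (fun ω => (Xt ω, Xu ω)) inferInstance] =ᵐ[μ] fun ω => 1 - m (Xu ω) := by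
    have h1 : μ[(fun ω => 1 - y ω)|MeasurableSpace.comap (fun ω => (Xt ω, Xu ω)) inferInstance] =ᵐ[μ] μ[(fun _ => (1 : ℝ))|MeasurableSpace.comap (fun ω => (Xt ω, Xu ω)) inferInstance] - μ[y|MeasurableSpace.comap (fun ω => (Xt ω, Xu ω)) inferInstance] := by
      have := condExp_sub (μ := μ) (m := MeasurableSpace.comap (fun ω => (Xt ω, Xu ω)) inferInstance) (integrable_const (1 : ℝ)) hy_int
      exact this
    have h2 : μ[(fun _ : Ω => (1 : ℝ))|MeasurableSpace.comap (fun ω => (Xt ω, Xu ω)) inferInstance] = fun _ => (1 : ℝ) := condExp_const hGle 1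
    filter_upwards [h1, hcond] with ω hω1 hω2
    simp only [hω1, Pi.sub_apply, h2, hω2]
  -- first bound: μ[a * (1 - y)|MeasurableSpace.comap (fun ω => (Xt ω, Xu ω)) inferInstance] = a * (1 - m ∘ Xu)
  have hmul1 : μ[(fun ω => a ω * (1 - y ω))|MeasurableSpace.comap (fun ω => (Xt ω, Xu ω)) inferInstance] =ᵐ[μ] fun ω => a ω * (1 - m (Xu ω)) := by
    have hint : Integrable (a * fun ω => 1 - y ω) μ := by
      refine hbint _ (ha_meas.mul ((measurable_const.sub hy_meas))) ?_
      intro ω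
      rcases ha01 ω with h' | h' <;> rcases hy01 ω with h'' | h'' <;>
        simp [Pi.mul_apply, h', h''] <;> norm_num
    have h := condExp_mul_of_stronglyMeasurable_left (μ := μ) ha_measG.stronglyMeasurable hint h1y_int
    filter_upwards [h, hsub] with ω hω1 hω2
    have : (fun ω => a ω * (1 - y ω)) = a * fun ω => 1 - y ω := rfl
    rw [this, hω1, Pi.mul_apply, hω2]
  -- second bound: μ[(1 - a) * y|MeasurableSpace.comap (fun ω => (Xt ω, Xu ω)) inferInstance] = (1 - a) * (m ∘ Xu)
  have hmul2 : μ[(fun ω => (1 - a ω) * y ω)|MeasurableSpace.comap (fun ω => (Xt ω, Xu ω)) inferInstance] =ᵐ[μ] fun ω => (1 - a ω) * m (Xu ω) := by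
    have h1a_measG : Measurable[MeasurableSpace.comap (fun ω => (Xt ω, Xu ω)) inferInstance] (fun ω => 1 - a ω) := measurable_const.sub ha_measG
    have hint : Integrable ((fun ω => 1 - a ω) * y) μ := by
      refine hbint _ ((measurable_const.sub ha_meas).mul hy_meas) ?_
      intro ω
      rcases ha01 ω with h' | h' <;> rcases hy01 ω with h'' | h'' <;>
        simp [Pi.mul_apply, h', h''] <;> norm_num
    have h := condExp_mul_of_stronglyMeasurable_left (μ := μ) h1a_measG.stronglyMeasurable hint hy_int
    filter_upwards [h, hcond] with ω hω1 hω2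
    have : (fun ω => (1 - a ω) * y ω) = (fun ω => 1 - a ω) * y := rfl
    rw [this, hω1, Pi.mul_apply, hω2]
  -- pointwise a.e. bounds
  have hbound1 : ∀ᵐ ω ∂μ, a ω * (1 - m (Xu ω)) ≤ δ + ε := by
    filter_upwards [hhigh] with ω hω
    rcases ha01 ω with h' | h'
    · rw [h', zero_mul]; linarith [hδ.1]
    · rw [h', one_mul]
      have hhalf : (1 : ℝ) / 2 ≤ mhat (Xu ω) := by
        by_contra hc
        rw [(haval ω).2 hc] at h'
        exact one_ne_zero h'.symm
      have hmin : 1 - mhat (Xu ω) ≤ δ := by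
        rcases min_le_iff.mp hω with h | h
        · exact h
        · linarith [hδ.2]
      have hε' := hacc (Xu ω) (hω.trans hΔ)
      rw [abs_le] at hε'
      linarith [hε'.1, hε'.2]
  have hbound2 : ∀ᵐ ω ∂μ, (1 - a ω) * m (Xu ω) ≤ δ + ε := by
    filter_upwards [hhigh] with ω hω
    rcases ha01 ω with h' | h'
    · rw [h', sub_zero, one_mul]
      have hhalf : ¬ (1 : ℝ) / 2 ≤ mhat (Xu ω) := by
        by_contra hc
        rw [(haval ω).1 hc] at h'
        exact one_ne_zero h'
      have hmin : mhat (Xu ω) ≤ δ := by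
        rcases min_le_iff.mp hω with h | h
        · linarith [hδ.2]
        · exact h
      have hε' := hacc (Xu ω) (hω.trans hΔ)
      rw [abs_le] at hε'
      linarith [hε'.1, hε'.2]
    · rw [h', sub_self, zero_mul]; linarith [hδ.1]
  -- claims 1 and 2
  have hfun1 : (fun ω' => if (1 : ℝ) / 2 ≤ mhat (Xu ω') ∧ Yt ω' = false then (1 : ℝ) else 0)
      = fun ω => a ω * (1 - y ω) := by
    funext ω
    by_cases h : (1 : ℝ) / 2 ≤ mhat (Xu ω) <;> cases h' : Yt ω
    · rw [if_pos ⟨h, rfl⟩, (haval ω).1 h, (hyval ω).2 h']; ring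
    · rw [if_neg (by simp [h']), (haval ω).1 h, (hyval ω).1 h']; ring
    · rw [if_neg (fun hh => h hh.1), (haval ω).2 h, (hyval ω).2 h']; ring
    · rw [if_neg (fun hh => h hh.1), (haval ω).2 h, (hyval ω).1 h']; ring
  have hfun2 : (fun ω' => if ¬ (1 : ℝ) / 2 ≤ mhat (Xu ω') ∧ Yt ω' = true then (1 : ℝ) else 0)
      = fun ω => (1 - a ω) * y ω := by
    funext ω
    by_cases h : (1 : ℝ) / 2 ≤ mhat (Xu ω) <;> cases h' : Yt ω
    · rw [if_neg (fun hh => hh.1 h), (haval ω).1 h, (hyval ω).2 h']; ring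
    · rw [if_neg (fun hh => hh.1 h), (haval ω).1 h, (hyval ω).1 h']; ring
    · rw [if_neg (by simp [h']), (haval ω).2 h, (hyval ω).2 h']; ring
    · rw [if_pos ⟨h, rfl⟩, (haval ω).2 h, (hyval ω).1 h']; ring
  have hclaim1 : ∀ᵐ ω ∂μ,
      (μ[(fun ω' => if (1 : ℝ) / 2 ≤ mhat (Xu ω') ∧ Yt ω' = false then (1 : ℝ) else 0)|MeasurableSpace.comap (fun ω => (Xt ω, Xu ω)) inferInstance]) ω
        ≤ δ + ε := by
    rw [hfun1]
    filter_upwards [hmul1, hbound1] with ω h1 h2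
    rw [h1]; exact h2
  have hclaim2 : ∀ᵐ ω ∂μ,
      (μ[(fun ω' => if ¬ (1 : ℝ) / 2 ≤ mhat (Xu ω') ∧ Yt ω' = true then (1 : ℝ) else 0)|MeasurableSpace.comap (fun ω => (Xt ω, Xu ω)) inferInstance]) ω
        ≤ δ + ε := by
    rw [hfun2]
    filter_upwards [hmul2, hbound2] with ω h1 h2
    rw [h1]; exact h2
  refine ⟨hclaim1, hclaim2, ?_⟩
  -- third claim
  have hmT_le_G : MeasurableSpace.comap Xt inferInstance ≤ MeasurableSpace.comap (fun ω => (Xt ω, Xu ω)) (inferInstance : MeasurableSpace _) := by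
    have hXtG : Measurable[MeasurableSpace.comap (fun ω => (Xt ω, Xu ω)) inferInstance] Xt := by
      have : Xt = Prod.fst ∘ (fun ω => (Xt ω, Xu ω)) := rfl
      rw [this]
      exact measurable_fst.comp (comap_measurable _)
    exact hXtG.comap_le
  set h3 : Ω → ℝ := fun ω' => |(if (1 : ℝ) / 2 ≤ mhat (Xu ω') then (1 : ℝ) else 0) -
      (if Yt ω' then (1 : ℝ) else 0)| with h3def
  have hsplit : h3 = fun ω => a ω * (1 - y ω) + (1 - a ω) * y ω := by
    funext ω
    have ha' : (if (1 : ℝ) / 2 ≤ mhat (Xu ω) then (1 : ℝ) else 0) = a ω := rfl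
    have hy' : (if Yt ω then (1 : ℝ) else 0) = y ω := rfl
    show |(if (1 : ℝ) / 2 ≤ mhat (Xu ω) then (1 : ℝ) else 0) -
        (if Yt ω then (1 : ℝ) else 0)| = _
    rw [ha', hy']
    rcases ha01 ω with h' | h' <;> rcases hy01 ω with h'' | h'' <;>
      rw [h', h''] <;> norm_num
  have hf1_int : Integrable (fun ω => a ω * (1 - y ω)) μ := by
    refine hbint _ (ha_meas.mul (measurable_const.sub hy_meas)) ?_
    intro ω
    rcases ha01 ω with h' | h' <;> rcases hy01 ω with h'' | h'' <;>
      simp [h', h''] <;> norm_num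
  have hf2_int : Integrable (fun ω => (1 - a ω) * y ω) μ := by
    refine hbint _ ((measurable_const.sub ha_meas).mul hy_meas) ?_
    intro ω
    rcases ha01 ω with h' | h' <;> rcases hy01 ω with h'' | h'' <;>
      simp [h', h''] <;> norm_num
  have hG3 : μ[h3|MeasurableSpace.comap (fun ω => (Xt ω, Xu ω)) inferInstance] ≤ᵐ[μ] fun _ => 2 * δ + 2 * ε := by
    have hadd : μ[h3|MeasurableSpace.comap (fun ω => (Xt ω, Xu ω)) inferInstance] =ᵐ[μ]
        μ[(fun ω => a ω * (1 - y ω))|MeasurableSpace.comap (fun ω => (Xt ω, Xu ω)) inferInstance] + μ[(fun ω => (1 - a ω) * y ω)|MeasurableSpace.comap (fun ω => (Xt ω, Xu ω)) inferInstance] := by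
      rw [hsplit]
      exact condExp_add hf1_int hf2_int _
    filter_upwards [hadd, hmul1, hmul2, hbound1, hbound2] with ω h0 h1 h2 hb1 hb2
    rw [h0, Pi.add_apply, h1, h2]
    linarith
  have htower : μ[h3|MeasurableSpace.comap Xt inferInstance] =ᵐ[μ] μ[μ[h3|MeasurableSpace.comap (fun ω => (Xt ω, Xu ω)) inferInstance]|MeasurableSpace.comap Xt inferInstance] :=
    (condExp_condExp_of_le hmT_le_G hGle).symm
  have hfinal : μ[μ[h3|MeasurableSpace.comap (fun ω => (Xt ω, Xu ω)) inferInstance]|MeasurableSpace.comap Xt inferInstance] ≤ᵐ[μ] fun _ => 2 * δ + 2 * ε := by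
    have := condExp_mono (μ := μ) (m := MeasurableSpace.comap Xt inferInstance) integrable_condExp
      (integrable_const (2 * δ + 2 * ε)) hG3
    have hc : μ[(fun _ : Ω => 2 * δ + 2 * ε)|MeasurableSpace.comap Xt inferInstance] = fun _ => 2 * δ + 2 * ε :=
      condExp_const (hmT_le_G.trans hGle) _
    rw [hc] at this
    exact this
  filter_upwards [htower, hfinal] with ω h1 h2
  rw [h1]; exact h2
end
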